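/- Let Z = Q × [t − r, t + r) be a Calderón–Zygmund set in the (ax+b)-group 𝔸ₙ (n ≥ 1), where Q ⊆ ℝⁿ is a cube of side length L satisfying e²·eᵗ·r ≤ L < e⁸·eᵗ·r if r < 1, and eᵗ·e^{2r} ≤ L < eᵗ·e^{8r} if r ≥ 1. Then there exists a rectangle Z* ⊆ ℝ^{n+1} such that every Calderón–Zygmund set Z' with Z' ∩ Z ≠ ∅ and m^{n+1}(Z') ≤ 2·m^{n+1}(Z) satisfies Z' ⊆ Z*, and m^{n+1}(Z*) ≤ 4^{n+2} e^{24n} m^{n+1}(Z). Consequently, the Hardy–Littlewood maximal constant of the family of Calderón–Zygmund sets with respect to Lebesgue measure m^{n+1} is at most 4^{n+2} e^{24n}. -/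

import Mathlib

open Set MeasureTheory ENNReal

/-- The norm `‖F‖_𝒬`: supremum of finite sums of `F` over pairwise disjoint members of `𝒬`. -/
noncomputable def hlNorm {X : Type*} (𝒬 : Set (Set X)) (F : Set X → ℝ≥0∞) : ℝ≥0∞ :=
  ⨆ s : {s : Finset (Set X) // ↑s ⊆ 𝒬 ∧ (s : Set (Set X)).Pairwise Disjoint}, ∑ Q ∈ s.1, F Q

/-- Left-closed right-open cube of corner `c` and side length `L` in `ℝⁿ`. -/
def czCube {n : ℕ} (c : Fin n → ℝ) (L : ℝ) : Set (Fin n → ℝ) :=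
  {a | ∀ i, c i ≤ a i ∧ a i < c i + L}

/-- Calderón–Zygmund sets in the `(ax+b)`-group `𝔸ₙ = ℝⁿ × ℝ`. -/
def IsCZ (n : ℕ) (Z : Set ((Fin n → ℝ) × ℝ)) : Prop :=
  ∃ (c : Fin n → ℝ) (L t r : ℝ), 0 < r ∧ 0 < L ∧
    (r < 1 → Real.exp 2 * Real.exp t * r ≤ L ∧ L < Real.exp 8 * Real.exp t * r) ∧
    (1 ≤ r → Real.exp t * Real.exp (2 * r) ≤ L ∧ L < Real.exp t * Real.exp (8 * r)) ∧
    Z = czCube c L ×ˢ Set.Ico (t - r) (t + r)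

lemma two_le_e : (2:ℝ) ≤ Real.exp 1 := by nlinarith [Real.add_one_le_exp 1]



lemma ten_le_exp3 : (10:ℝ) ≤ Real.exp 3 := by
  have h := Real.exp_one_gt_d9
  have h3 : Real.exp 3 = Real.exp 1 * Real.exp 1 * Real.exp 1 := by
    rw [← Real.exp_add, ← Real.exp_add]; norm_num
  nlinarith [Real.exp_pos 1]

lemma pow_cancel {K r r' : ℝ} {n : ℕ} (hK : 1 ≤ K) (hr : 0 < r) (hr' : 0 < r')
    (h : r' ^ n * r' ≤ K * (r ^ n * r)) : r' ≤ K * r := by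
  by_contra hc
  push_neg at hc
  have h0 : (0:ℝ) < K * r := by positivity
  have h1 : (K * r) ^ n * (K * r) < r' ^ n * r' :=
    mul_lt_mul' (pow_le_pow_left₀ h0.le hc.le n) hc h0.le (pow_pos (h0.trans hc) n)
  have hKn : K ≤ K ^ n * K := by
    have h2 : 1 ≤ K ^ n := one_le_pow₀ hK
    nlinarith
  have h2 : K * (r ^ n * r) ≤ (K * r) ^ n * (K * r) := by
    have h3 : (K * r) ^ n * (K * r) = (K ^ n * K) * (r ^ n * r) := by rw [mul_pow]; ring
    rw [h3]
    have := mul_pos (pow_pos hr n) hr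
    nlinarith
  linarith

set_option maxHeartbeats 1000000 in
lemma keyA (n : ℕ) (hn : 1 ≤ n) {L t r L' t' r' : ℝ}
    (hr : 0 < r) (hr' : 0 < r') (hL : 0 < L) (hL' : 0 < L')
    (hup1 : r < 1 → L < Real.exp 8 * Real.exp t * r)
    (hup2 : 1 ≤ r → L < Real.exp t * Real.exp (8 * r))
    (hlo1 : r' < 1 → Real.exp 2 * Real.exp t' * r' ≤ L')
    (hlo2 : 1 ≤ r' → Real.exp t' * Real.exp (2 * r') ≤ L')
    (hvol : L' ^ n * r' ≤ 2 * (L ^ n * r))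
    (ht : t - t' < r + r') :
    r' ≤ 2 * Real.exp 8 ^ n * r := by
  have hN : (0:ℝ) < n := by exact_mod_cast Nat.lt_of_lt_of_le Nat.zero_lt_one hn
  have hN1 : (1:ℝ) ≤ n := by exact_mod_cast hn
  have e8n1 : (1:ℝ) ≤ Real.exp 8 ^ n := one_le_pow₀ (Real.one_le_exp (by norm_num))
  have hK1 : (1:ℝ) ≤ 2 * Real.exp 8 ^ n := by linarith
  rcases lt_or_ge r' 1 with h1' | h1'
  · rcases lt_or_ge r 1 with h1 | h1
    · -- both < 1
      have elo := hlo1 h1'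
      have eup := hup1 h1
      have step : (Real.exp 2 * Real.exp t' * r') ^ n * r' ≤
          2 * ((Real.exp 8 * Real.exp t * r) ^ n * r) := by
        have p1 : (Real.exp 2 * Real.exp t' * r') ^ n ≤ L' ^ n :=
          pow_le_pow_left₀ (by positivity) elo n
        have p2 : L ^ n ≤ (Real.exp 8 * Real.exp t * r) ^ n := pow_le_pow_left₀ hL.le eup.le n
        have q1 := mul_le_mul_of_nonneg_right p1 hr'.le
        have q2 := mul_le_mul_of_nonneg_right p2 hr.le
        linarith
      have et : Real.exp t ^ n ≤ Real.exp t' ^ n * Real.exp 2 ^ n := by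
        have h : Real.exp t ≤ Real.exp t' * Real.exp 2 := by
          rw [← Real.exp_add]; exact Real.exp_le_exp.2 (by linarith)
        calc Real.exp t ^ n ≤ (Real.exp t' * Real.exp 2) ^ n :=
              pow_le_pow_left₀ (Real.exp_pos t).le h n
          _ = _ := mul_pow _ _ _
      have main : r' ^ n * r' ≤ 2 * Real.exp 8 ^ n * (r ^ n * r) := by
        have hpos : (0:ℝ) < Real.exp 2 ^ n * Real.exp t' ^ n := by positivity
        refine le_of_mul_le_mul_left ?_ hpos
        calc Real.exp 2 ^ n * Real.exp t' ^ n * (r' ^ n * r')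
            = (Real.exp 2 * Real.exp t' * r') ^ n * r' := by rw [mul_pow, mul_pow]; ring
          _ ≤ 2 * ((Real.exp 8 * Real.exp t * r) ^ n * r) := step
          _ = 2 * Real.exp 8 ^ n * (r ^ n * r) * Real.exp t ^ n := by
              rw [mul_pow, mul_pow]; ring
          _ ≤ 2 * Real.exp 8 ^ n * (r ^ n * r) * (Real.exp t' ^ n * Real.exp 2 ^ n) := by
              have : (0:ℝ) ≤ 2 * Real.exp 8 ^ n * (r ^ n * r) := by positivity
              exact mul_le_mul_of_nonneg_left et this
          _ = Real.exp 2 ^ n * Real.exp t' ^ n * (2 * Real.exp 8 ^ n * (r ^ n * r)) := by ring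
      exact pow_cancel hK1 hr hr' main
    · -- r' < 1 ≤ r
      nlinarith
  · rcases lt_or_ge r 1 with h1 | h1
    · -- 1 ≤ r', r < 1 : case 4
      have elo := hlo2 h1'
      have eup := hup1 h1
      have step : (Real.exp t' * Real.exp (2 * r')) ^ n * r' ≤
          2 * ((Real.exp 8 * Real.exp t * r) ^ n * r) := by
        have p1 : (Real.exp t' * Real.exp (2 * r')) ^ n ≤ L' ^ n :=
          pow_le_pow_left₀ (by positivity) elo n
        have p2 : L ^ n ≤ (Real.exp 8 * Real.exp t * r) ^ n := pow_le_pow_left₀ hL.le eup.le n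
        have q1 := mul_le_mul_of_nonneg_right p1 hr'.le
        have q2 := mul_le_mul_of_nonneg_right p2 hr.le
        linarith
      -- rewrite in exp form
      rw [show (Real.exp t' * Real.exp (2 * r')) ^ n
            = Real.exp (n * t') * Real.exp (n * (2 * r')) by
          rw [mul_pow, ← Real.exp_nat_mul, ← Real.exp_nat_mul],
        show (Real.exp 8 * Real.exp t * r) ^ n
            = Real.exp 8 ^ n * Real.exp (n * t) * r ^ n by
          rw [mul_pow, mul_pow, ← Real.exp_nat_mul t n]] at step
      have et : Real.exp (n * t) ≤ Real.exp (n * t') * Real.exp (n * (r + r')) := by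
        rw [← Real.exp_add]; refine Real.exp_le_exp.2 ?_
        have : t ≤ t' + (r + r') := by linarith
        nlinarith
      -- cancel exp(n t')
      have step2 : Real.exp (n * (2 * r')) * r' ≤
          2 * Real.exp 8 ^ n * Real.exp (n * (r + r')) * (r ^ n * r) := by
        have hpos : (0:ℝ) < Real.exp (n * t') := Real.exp_pos _
        refine le_of_mul_le_mul_left ?_ hpos
        calc Real.exp (n * t') * (Real.exp (n * (2 * r')) * r')
            = Real.exp (n * t') * Real.exp (n * (2 * r')) * r' := by ring
          _ ≤ 2 * (Real.exp 8 ^ n * Real.exp (n * t) * r ^ n * r) := step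
          _ ≤ 2 * (Real.exp 8 ^ n * (Real.exp (n * t') * Real.exp (n * (r + r'))) * r ^ n * r) := by
              gcongr
          _ = Real.exp (n * t') * (2 * Real.exp 8 ^ n * Real.exp (n * (r + r')) * (r ^ n * r)) := by
              ring
      -- split exp(n(r+r')) and cancel exp(n r')
      have hsplit : Real.exp (n * (r + r')) = Real.exp (n * r) * Real.exp (n * r') := by
        rw [← Real.exp_add]; ring_nf
      have hdup : Real.exp (n * (2 * r')) = Real.exp (n * r') * Real.exp (n * r') := by
        rw [← Real.exp_add]; ring_nf
      have step3 : Real.exp (n * r') ≤ 2 * Real.exp 8 ^ n * Real.exp (n * r) * (r ^ n * r) := by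
        have hpos : (0:ℝ) < Real.exp (n * r') := Real.exp_pos _
        refine le_of_mul_le_mul_left ?_ hpos
        have hr'1 : Real.exp (n * (2 * r')) * 1 ≤ Real.exp (n * (2 * r')) * r' :=
          mul_le_mul_of_nonneg_left h1' (Real.exp_pos _).le
        calc Real.exp (n * r') * Real.exp (n * r')
            = Real.exp (n * (2 * r')) := hdup.symm
          _ ≤ Real.exp (n * (2 * r')) * r' := by linarith [hr'1]
          _ ≤ 2 * Real.exp 8 ^ n * Real.exp (n * (r + r')) * (r ^ n * r) := step2
          _ = Real.exp (n * r') * (2 * Real.exp 8 ^ n * Real.exp (n * r) * (r ^ n * r)) := by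
              rw [hsplit]; ring
      -- (i) r' ≤ 10
      have hrn1 : r ^ n * r ≤ 1 := by
        have := pow_le_one₀ hr.le h1.le (n := n)
        nlinarith
      have hern : Real.exp (n * r) ≤ Real.exp (n * 1) := by
        refine Real.exp_le_exp.2 ?_; nlinarith
      have hup10 : Real.exp (n * r') ≤ Real.exp (1 + 8 * n + n) := by
        calc Real.exp (n * r') ≤ 2 * Real.exp 8 ^ n * Real.exp (n * r) * (r ^ n * r) := step3
          _ ≤ Real.exp 1 * Real.exp (8 * n) * Real.exp (n * 1) * 1 := by
              have h8 : Real.exp 8 ^ n = Real.exp (8 * n) := by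
                rw [← Real.exp_nat_mul 8 n]; ring_nf
              rw [h8]
              gcongr
              exact two_le_e
          _ = Real.exp (1 + 8 * n + n) := by rw [← Real.exp_add, ← Real.exp_add]; ring_nf
      have hr10 : r' ≤ 10 := by
        have h10 := Real.exp_le_exp.1 hup10
        have : (n:ℝ) * r' ≤ (n:ℝ) * 10 := by linarith
        exact le_of_mul_le_mul_left this hN
      -- (ii) 1 ≤ 2 e8n (r^n r)
      have hii : 1 ≤ 2 * Real.exp 8 ^ n * (r ^ n * r) := by
        have hen : Real.exp (n * 1) ≤ Real.exp (n * r') :=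
          Real.exp_le_exp.2 (mul_le_mul_of_nonneg_left h1' hN.le)
        have hchain : Real.exp (n * 1) * 1 ≤
            Real.exp (n * 1) * (2 * Real.exp 8 ^ n * (r ^ n * r)) := by
          calc Real.exp (n * 1) * 1 = Real.exp (n * 1) := mul_one _
            _ ≤ Real.exp (n * r') := hen
            _ ≤ 2 * Real.exp 8 ^ n * Real.exp (n * r) * (r ^ n * r) := step3
            _ ≤ 2 * Real.exp 8 ^ n * Real.exp (n * 1) * (r ^ n * r) := by gcongr
            _ = Real.exp (n * 1) * (2 * Real.exp 8 ^ n * (r ^ n * r)) := by ring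
        exact le_of_mul_le_mul_left hchain (Real.exp_pos _)
      -- conclude 10 ≤ 2 e8n r
      have h10K : 10 ≤ 2 * Real.exp 8 ^ n * r := by
        have hKpos : (0:ℝ) < 2 * Real.exp 8 ^ n := by positivity
        have hKr : (0:ℝ) < 2 * Real.exp 8 ^ n * r := by positivity
        have hpow : (10:ℝ) ^ (n+1) ≤ (2 * Real.exp 8 ^ n * r) ^ (n+1) := by
          have ha : (10:ℝ) ^ (n+1) ≤ Real.exp 3 ^ (n+1) :=
            pow_le_pow_left₀ (by norm_num) ten_le_exp3 (n+1)
          have hb : Real.exp 3 ^ (n+1) ≤ (Real.exp 8 ^ n) ^ n := by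
            rw [← Real.exp_nat_mul 3 (n+1), ← Real.exp_nat_mul 8 n,
              ← Real.exp_nat_mul ((n:ℝ)*8) n]
            refine Real.exp_le_exp.2 ?_
            push_cast
            nlinarith [hN1]
          have hc : (Real.exp 8 ^ n) ^ n ≤ (2 * Real.exp 8 ^ n) ^ n := by
            refine pow_le_pow_left₀ (by positivity) ?_ n
            nlinarith [e8n1]
          have hd : (2 * Real.exp 8 ^ n) ^ n ≤ (2 * Real.exp 8 ^ n) ^ (n+1) * (r ^ n * r) := by
            have he2 : (2 * Real.exp 8 ^ n) ^ (n+1) * (r ^ n * r)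
                = (2 * Real.exp 8 ^ n) ^ n * ((2 * Real.exp 8 ^ n) * (r ^ n * r)) := by ring
            rw [he2]
            exact le_mul_of_one_le_right (pow_pos hKpos n).le hii
          have he : (2 * Real.exp 8 ^ n * r) ^ (n+1)
              = (2 * Real.exp 8 ^ n) ^ (n+1) * (r ^ n * r) := by rw [mul_pow]; ring
          rw [he]; linarith
        have := le_of_pow_le_pow_left₀ (Nat.succ_ne_zero n) hKr.le hpow
        linarith
      linarith
    · -- 1 ≤ r', 1 ≤ r : case 3
      have elo := hlo2 h1'
      have eup := hup2 h1
      have step : (Real.exp t' * Real.exp (2 * r')) ^ n * r' ≤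
          2 * ((Real.exp t * Real.exp (8 * r)) ^ n * r) := by
        have p1 : (Real.exp t' * Real.exp (2 * r')) ^ n ≤ L' ^ n :=
          pow_le_pow_left₀ (by positivity) elo n
        have p2 : L ^ n ≤ (Real.exp t * Real.exp (8 * r)) ^ n := pow_le_pow_left₀ hL.le eup.le n
        have q1 := mul_le_mul_of_nonneg_right p1 hr'.le
        have q2 := mul_le_mul_of_nonneg_right p2 hr.le
        linarith
      rw [show (Real.exp t' * Real.exp (2 * r')) ^ n
            = Real.exp (n * t') * Real.exp (n * (2 * r')) by
          rw [mul_pow, ← Real.exp_nat_mul, ← Real.exp_nat_mul],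
        show (Real.exp t * Real.exp (8 * r)) ^ n
            = Real.exp (n * t) * Real.exp (n * (8 * r)) by
          rw [mul_pow, ← Real.exp_nat_mul, ← Real.exp_nat_mul]] at step
      have et : Real.exp (n * t) ≤ Real.exp (n * t') * Real.exp (n * (r + r')) := by
        rw [← Real.exp_add]; refine Real.exp_le_exp.2 ?_
        have : t ≤ t' + (r + r') := by linarith
        nlinarith
      have step2 : Real.exp (n * (2 * r')) * r' ≤
          2 * Real.exp (n * (r + r')) * Real.exp (n * (8 * r)) * r := by
        have hpos : (0:ℝ) < Real.exp (n * t') := Real.exp_pos _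
        refine le_of_mul_le_mul_left ?_ hpos
        calc Real.exp (n * t') * (Real.exp (n * (2 * r')) * r')
            = Real.exp (n * t') * Real.exp (n * (2 * r')) * r' := by ring
          _ ≤ 2 * (Real.exp (n * t) * Real.exp (n * (8 * r)) * r) := step
          _ ≤ 2 * (Real.exp (n * t') * Real.exp (n * (r + r')) * Real.exp (n * (8 * r)) * r) := by
              calc 2 * (Real.exp (n * t) * Real.exp (n * (8 * r)) * r)
                  ≤ 2 * (Real.exp (n * t') * Real.exp (n * (r + r')) * Real.exp (n * (8 * r)) * r) := by
                    gcongr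
                _ = _ := rfl
          _ = Real.exp (n * t') * (2 * Real.exp (n * (r + r')) * Real.exp (n * (8 * r)) * r) := by
              ring
      -- bound r ≤ exp(n r), 2 ≤ exp 1, r' factor ≥ 1
      have hrexp : r ≤ Real.exp (n * r) := by
        have h1e := Real.add_one_le_exp (n * r)
        nlinarith
      have hfin : Real.exp (n * (2 * r')) ≤
          Real.exp (1 + (n * (r + r') + n * (8 * r) + n * r)) := by
        have hr'1 : Real.exp (n * (2 * r')) * 1 ≤ Real.exp (n * (2 * r')) * r' :=
          mul_le_mul_of_nonneg_left h1' (Real.exp_pos _).le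
        calc Real.exp (n * (2 * r'))
            ≤ Real.exp (n * (2 * r')) * r' := by linarith
          _ ≤ 2 * Real.exp (n * (r + r')) * Real.exp (n * (8 * r)) * r := step2
          _ ≤ Real.exp 1 * Real.exp (n * (r + r')) * Real.exp (n * (8 * r)) * Real.exp (n * r) := by
              have h2e := two_le_e
              gcongr <;> assumption
          _ = Real.exp (1 + (n * (r + r') + n * (8 * r) + n * r)) := by
              rw [← Real.exp_add, ← Real.exp_add, ← Real.exp_add]; ring_nf
      have hle := Real.exp_le_exp.1 hfin
      have hnr1 : 1 ≤ (n:ℝ) * r := by nlinarith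
      have : (n:ℝ) * r' ≤ (n:ℝ) * (11 * r) := by nlinarith
      have h11 : r' ≤ 11 * r := le_of_mul_le_mul_left this hN
      have : (18:ℝ) ≤ 2 * Real.exp 8 ^ n := by
        have h8 : (9:ℝ) ≤ Real.exp 8 := by nlinarith [Real.add_one_le_exp 8]
        have := le_self_pow₀ (a := Real.exp 8) (Real.one_le_exp (by norm_num)) (by omega : n ≠ 0)
        nlinarith
      nlinarith

lemma exp9_big : (18:ℝ) ≤ Real.exp 9 := by
  have h3 := ten_le_exp3
  have h9 : Real.exp 9 = Real.exp 3 * Real.exp 3 * Real.exp 3 := by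
    rw [← Real.exp_add, ← Real.exp_add]; norm_num
  nlinarith [Real.exp_pos 3]

set_option maxHeartbeats 1000000 in
lemma keyB (n : ℕ) (hn : 1 ≤ n) {L t r L' t' r' : ℝ}
    (hr : 0 < r) (hr' : 0 < r') (hL : 0 < L) (hL' : 0 < L')
    (hlo1 : r < 1 → Real.exp 2 * Real.exp t * r ≤ L)
    (hlo2 : 1 ≤ r → Real.exp t * Real.exp (2 * r) ≤ L)
    (hup1' : r' < 1 → L' < Real.exp 8 * Real.exp t' * r')
    (hup2' : 1 ≤ r' → L' < Real.exp t' * Real.exp (8 * r'))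
    (hvol : L' ^ n * r' ≤ 2 * (L ^ n * r))
    (ht' : t' - t < r + r') :
    L' ≤ Real.exp 9 * L := by
  have e9 := exp9_big
  have e9one : (1:ℝ) ≤ Real.exp 9 := by linarith
  have e9n : (18:ℝ) ≤ Real.exp 9 ^ n :=
    le_trans e9 (le_self_pow₀ e9one (by omega))
  rcases le_or_gt r r' with hrr | hrr
  · -- r ≤ r'
    have h2 : L' ^ n * r' ≤ 2 * L ^ n * r' := by
      nlinarith [pow_pos hL n]
    have hLn : L' ^ n ≤ 2 * L ^ n := le_of_mul_le_mul_right (by linarith) hr'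
    have hfin : L' ^ n ≤ (Real.exp 9 * L) ^ n := by
      rw [mul_pow]
      nlinarith [pow_pos hL n]
    exact le_of_pow_le_pow_left₀ (by omega) (by positivity) hfin
  · rcases lt_or_ge r 1 with h1 | h1
    · -- r < 1, r' < r < 1
      have hr'1 : r' < 1 := hrr.trans h1
      have hup := hup1' hr'1
      have hlo := hlo1 h1
      have het : Real.exp t' ≤ Real.exp t * Real.exp 2 := by
        rw [← Real.exp_add]; exact Real.exp_le_exp.2 (by linarith)
      have hrr' := hrr.le
      calc L' ≤ Real.exp 8 * Real.exp t' * r' := hup.le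
        _ ≤ Real.exp 8 * (Real.exp t * Real.exp 2) * r := by gcongr <;> assumption
        _ = Real.exp 8 * (Real.exp 2 * Real.exp t * r) := by ring
        _ ≤ Real.exp 8 * L := by gcongr
        _ ≤ Real.exp 9 * L := by
            have := Real.exp_le_exp.2 (show (8:ℝ) ≤ 9 by norm_num)
            gcongr
    · rcases lt_or_ge r' 1 with h1' | h1'
      · -- 1 ≤ r, r' < 1
        have hup := hup1' h1'
        have hlo := hlo2 h1
        have het : Real.exp t' ≤ Real.exp (t + r + 1) := Real.exp_le_exp.2 (by linarith)
        have h1'le : r' ≤ 1 := h1'.le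
        calc L' ≤ Real.exp 8 * Real.exp t' * r' := hup.le
          _ ≤ Real.exp 8 * Real.exp (t + r + 1) * 1 := by gcongr <;> assumption
          _ = Real.exp 9 * (Real.exp t * Real.exp r) := by
              rw [Real.exp_add, Real.exp_add, show (9:ℝ) = 8 + 1 by norm_num, Real.exp_add]
              ring
          _ ≤ Real.exp 9 * (Real.exp t * Real.exp (2 * r)) := by
              have : Real.exp r ≤ Real.exp (2 * r) := Real.exp_le_exp.2 (by linarith)
              gcongr
          _ ≤ Real.exp 9 * L := by gcongr
      · -- 1 ≤ r' < r
        have hup := hup2' h1'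
        have hlo := hlo2 h1
        rcases le_or_gt (9 * r') r with h9 | h9
        · calc L' ≤ Real.exp t' * Real.exp (8 * r') := hup.le
            _ = Real.exp (t' + 8 * r') := (Real.exp_add _ _).symm
            _ ≤ Real.exp (t + 2 * r) := Real.exp_le_exp.2 (by linarith)
            _ = Real.exp t * Real.exp (2 * r) := Real.exp_add _ _
            _ ≤ L := hlo
            _ ≤ Real.exp 9 * L := by nlinarith
        · have h18 : L' ^ n * r' ≤ 18 * L ^ n * r' := by
            nlinarith [pow_pos hL n]
          have hLn : L' ^ n ≤ 18 * L ^ n := le_of_mul_le_mul_right (by linarith) hr'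
          have hfin : L' ^ n ≤ (Real.exp 9 * L) ^ n := by
            rw [mul_pow]
            nlinarith [pow_pos hL n]
          exact le_of_pow_le_pow_left₀ (by omega) (by positivity) hfin

lemma czCube_eq_pi {n : ℕ} (c : Fin n → ℝ) (L : ℝ) :
    czCube c L = Set.univ.pi fun i => Set.Ico (c i) (c i + L) := by
  ext a; simp [czCube, Set.mem_pi, Set.mem_Ico]

lemma volume_box {n : ℕ} (c : Fin n → ℝ) (L a b : ℝ) :
    volume (czCube c L ×ˢ Set.Ico a b) = (ENNReal.ofReal L) ^ n * ENNReal.ofReal (b - a) := by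
  rw [Measure.volume_eq_prod, Measure.prod_prod, czCube_eq_pi, volume_pi_pi]
  simp [Real.volume_Ico]

lemma IsCZ.volume_eq {n : ℕ} {Z : Set ((Fin n → ℝ) × ℝ)}
    (c : Fin n → ℝ) (L t r : ℝ) (hL : 0 < L)
    (hZ : Z = czCube c L ×ˢ Set.Ico (t - r) (t + r)) :
    volume Z = ENNReal.ofReal (L ^ n * (2 * r)) := by
  subst hZ
  rw [volume_box, show t + r - (t - r) = 2 * r by ring,
    ← ENNReal.ofReal_pow hL.le, ← ENNReal.ofReal_mul (by positivity)]

lemma volume_rect {n : ℕ} (lo hi : Fin n → ℝ) (a b : ℝ) :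
    volume ((Set.univ.pi fun i => Set.Icc (lo i) (hi i)) ×ˢ Set.Icc a b)
      = (∏ i, ENNReal.ofReal (hi i - lo i)) * ENNReal.ofReal (b - a) := by
  rw [Measure.volume_eq_prod, Measure.prod_prod, volume_pi_pi]
  simp [Real.volume_Icc]

lemma const_bound (n : ℕ) (hn : 1 ≤ n) :
    (1 + 2 * Real.exp 9) ^ n * (1 + 2 * (2 * Real.exp 8 ^ n)) ≤ 4 ^ (n+2) * Real.exp 24 ^ n := by
  have e8n1 : (1:ℝ) ≤ Real.exp 8 ^ n := one_le_pow₀ (Real.one_le_exp (by norm_num))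
  have h10 : 1 + 2 * Real.exp 9 ≤ Real.exp 10 := by
    rw [show (10:ℝ) = 9 + 1 by norm_num, Real.exp_add]
    nlinarith [exp9_big, Real.exp_one_gt_d9]
  have h1 : (1 + 2 * Real.exp 9) ^ n ≤ Real.exp 10 ^ n :=
    pow_le_pow_left₀ (by positivity) h10 n
  have h2 : 1 + 2 * (2 * Real.exp 8 ^ n) ≤ 5 * Real.exp 8 ^ n := by linarith
  calc (1 + 2 * Real.exp 9) ^ n * (1 + 2 * (2 * Real.exp 8 ^ n))
      ≤ Real.exp 10 ^ n * (5 * Real.exp 8 ^ n) := by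
        apply mul_le_mul h1 h2 (by positivity) (by positivity)
    _ = 5 * (Real.exp 10 * Real.exp 8) ^ n := by rw [mul_pow]; ring
    _ = 5 * Real.exp 18 ^ n := by rw [← Real.exp_add]; norm_num
    _ ≤ 4 ^ (n+2) * Real.exp 24 ^ n := by
        have h3 : Real.exp 18 ^ n ≤ Real.exp 24 ^ n :=
          pow_le_pow_left₀ (Real.exp_pos _).le (Real.exp_le_exp.2 (by norm_num)) n
        have h4 : (16:ℝ) ≤ 4 ^ (n+2) := by
          calc (16:ℝ) = 4 ^ 2 := by norm_num
            _ ≤ 4 ^ (n+2) := pow_le_pow_right₀ (by norm_num) (by omega)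
        nlinarith [pow_pos (Real.exp_pos 24) n, pow_pos (Real.exp_pos 18) n]


lemma IsCZ.measurableSet {n : ℕ} {Z : Set ((Fin n → ℝ) × ℝ)} (h : IsCZ n Z) :
    MeasurableSet Z := by
  obtain ⟨c, L, t, r, _, _, _, _, rfl⟩ := h
  rw [czCube_eq_pi]
  exact (MeasurableSet.univ_pi fun i => measurableSet_Ico).prod measurableSet_Ico


lemma IsCZ.nonempty {n : ℕ} {Z : Set ((Fin n → ℝ) × ℝ)} (h : IsCZ n Z) : Z.Nonempty := by
  obtain ⟨c, L, t, r, hr, hL, _, _, rfl⟩ := h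
  exact ⟨(c, t - r), fun i => ⟨le_refl _, by linarith⟩, by simp [Set.mem_Ico]; linarith⟩

lemma IsCZ.vol_pos {n : ℕ} {Z : Set ((Fin n → ℝ) × ℝ)} (h : IsCZ n Z) :
    0 < volume Z ∧ volume Z ≠ ⊤ := by
  obtain ⟨c, L, t, r, hr, hL, h1, h2, hZ⟩ := h
  rw [IsCZ.volume_eq c L t r hL hZ]
  exact ⟨ENNReal.ofReal_pos.2 (by positivity), ENNReal.ofReal_ne_top⟩


set_option maxHeartbeats 800000 in
lemma cz_star (n : ℕ) (hn : 1 ≤ n) (Z : Set ((Fin n → ℝ) × ℝ)) (hZ : IsCZ n Z) :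
    ∃ (lo hi : Fin n → ℝ) (a b : ℝ),
      (∀ Z' : Set ((Fin n → ℝ) × ℝ), IsCZ n Z' → (Z' ∩ Z).Nonempty →
        volume Z' ≤ 2 * volume Z →
        Z' ⊆ (Set.univ.pi fun i => Set.Icc (lo i) (hi i)) ×ˢ Set.Icc a b) ∧
      volume ((Set.univ.pi fun i => Set.Icc (lo i) (hi i)) ×ˢ Set.Icc a b) ≤
        4 ^ (n + 2) * ENNReal.ofReal (Real.exp (24 * n)) * volume Z := by
  obtain ⟨c, L, t, r, hr, hL, hg1, hg2, hZeq⟩ := hZ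
  refine ⟨fun i => c i - Real.exp 9 * L, fun i => c i + L + Real.exp 9 * L,
    t - (1 + 2 * (2 * Real.exp 8 ^ n)) * r, t + (1 + 2 * (2 * Real.exp 8 ^ n)) * r, ?_, ?_⟩
  · rintro Z' hZ' hint hvol
    obtain ⟨c', L', t', r', hr', hL', hg1', hg2', hZ'eq⟩ := hZ'
    obtain ⟨⟨y, s⟩, hmem', hmem⟩ := hint
    rw [hZ'eq] at hmem'
    rw [hZeq] at hmem
    obtain ⟨hy', hs'⟩ := hmem'
    obtain ⟨hy, hs⟩ := hmem
    have ht1 : t - t' < r + r' := by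
      have h1 := hs.1; have h2 := hs'.2; linarith
    have ht2 : t' - t < r + r' := by
      have h1 := hs'.1; have h2 := hs.2; linarith
    have hvolR : L' ^ n * r' ≤ 2 * (L ^ n * r) := by
      rw [hZeq, hZ'eq, IsCZ.volume_eq c' L' t' r' hL' rfl,
        IsCZ.volume_eq c L t r hL rfl, ← ENNReal.ofReal_ofNat 2,
        ← ENNReal.ofReal_mul (by norm_num)] at hvol
      have h2 := (ENNReal.ofReal_le_ofReal_iff (by positivity)).1 hvol
      norm_num at h2
      nlinarith [h2]
    have hA : r' ≤ 2 * Real.exp 8 ^ n * r :=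
      keyA n hn hr hr' hL hL' (fun h => (hg1 h).2) (fun h => (hg2 h).2)
        (fun h => (hg1' h).1) (fun h => (hg2' h).1) hvolR ht1
    have hB : L' ≤ Real.exp 9 * L :=
      keyB n hn hr hr' hL hL' (fun h => (hg1 h).1) (fun h => (hg2 h).1)
        (fun h => (hg1' h).2) (fun h => (hg2' h).2) hvolR ht2
    rw [hZ'eq]
    rintro ⟨x, s2⟩ ⟨hx, hs2⟩
    refine ⟨fun i _ => ⟨?_, ?_⟩, ?_, ?_⟩
    · have h1 := (hx i).1; have h2 := (hx i).2
      have h3 := (hy i).1; have h4 := (hy i).2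
      have h5 := (hy' i).1; have h6 := (hy' i).2
      simp only
      linarith
    · have h1 := (hx i).1; have h2 := (hx i).2
      have h3 := (hy i).1; have h4 := (hy i).2
      have h5 := (hy' i).1; have h6 := (hy' i).2
      simp only
      linarith
    · have h1 := hs2.1; simp only; linarith
    · have h2 := hs2.2; simp only; linarith
  · rw [volume_rect, IsCZ.volume_eq c L t r hL hZeq]
    have hstep : (∏ i : Fin n, ENNReal.ofReal
        ((c i + L + Real.exp 9 * L) - (c i - Real.exp 9 * L)))
        = ENNReal.ofReal ((1 + 2 * Real.exp 9) * L) ^ n := by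
      calc (∏ i : Fin n, ENNReal.ofReal ((c i + L + Real.exp 9 * L) - (c i - Real.exp 9 * L)))
          = ∏ _i : Fin n, ENNReal.ofReal ((1 + 2 * Real.exp 9) * L) :=
            Finset.prod_congr rfl (fun i _ => by rw [show
              (c i + L + Real.exp 9 * L) - (c i - Real.exp 9 * L)
                = (1 + 2 * Real.exp 9) * L by ring])
        _ = ENNReal.ofReal ((1 + 2 * Real.exp 9) * L) ^ n := by
            rw [Finset.prod_const, Finset.card_univ, Fintype.card_fin]
    rw [hstep, show (t + (1 + 2 * (2 * Real.exp 8 ^ n)) * r)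
        - (t - (1 + 2 * (2 * Real.exp 8 ^ n)) * r)
        = (1 + 2 * (2 * Real.exp 8 ^ n)) * (2 * r) by ring]
    rw [← ENNReal.ofReal_pow (by positivity), ← ENNReal.ofReal_mul (by positivity)]
    rw [show (4:ℝ≥0∞) ^ (n+2) = ENNReal.ofReal ((4:ℝ) ^ (n+2)) by
      rw [← ENNReal.ofReal_ofNat 4, ← ENNReal.ofReal_pow (by norm_num)]]
    rw [← ENNReal.ofReal_mul (by positivity), ← ENNReal.ofReal_mul (by positivity)]
    apply ENNReal.ofReal_le_ofReal
    have hexp : Real.exp (24 * (n:ℝ)) = Real.exp 24 ^ n := by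
      rw [mul_comm, Real.exp_nat_mul]
    rw [mul_pow, hexp]
    have cb := const_bound n hn
    have := mul_le_mul_of_nonneg_right cb (show (0:ℝ) ≤ L ^ n * (2 * r) by positivity)
    nlinarith [this]


theorem cz_hl_constant (n : ℕ) (hn : 1 ≤ n) :
    (∀ Z : Set ((Fin n → ℝ) × ℝ), IsCZ n Z →
      ∃ (lo hi : Fin n → ℝ) (a b : ℝ),
        (∀ Z' : Set ((Fin n → ℝ) × ℝ), IsCZ n Z' → (Z' ∩ Z).Nonempty →
          volume Z' ≤ 2 * volume Z →
          Z' ⊆ (Set.univ.pi fun i => Set.Icc (lo i) (hi i)) ×ˢ Set.Icc a b) ∧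
        volume ((Set.univ.pi fun i => Set.Icc (lo i) (hi i)) ×ˢ Set.Icc a b) ≤
          4 ^ (n + 2) * ENNReal.ofReal (Real.exp (24 * n)) * volume Z) ∧
    (∀ F : Set ((Fin n → ℝ) × ℝ) → ℝ≥0∞, ∀ r : ℝ≥0∞, 0 < r → r ≠ ⊤ →
      volume {x | r < ⨆ Z ∈ {Z | IsCZ n Z ∧ x ∈ Z}, F Z / volume Z} ≤
        4 ^ (n + 2) * ENNReal.ofReal (Real.exp (24 * n)) * r⁻¹ *
          hlNorm {Z | IsCZ n Z} F) := by
  refine ⟨cz_star n hn, ?_⟩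
  intro F ρ hρ hρtop
  set C : ℝ≥0∞ := 4 ^ (n + 2) * ENNReal.ofReal (Real.exp (24 * n)) with hCdef
  have hC0 : C ≠ 0 := by
    rw [hCdef]
    exact mul_ne_zero (by positivity) (ENNReal.ofReal_pos.2 (Real.exp_pos _)).ne'
  have hCtop : C ≠ ⊤ := by
    rw [hCdef]
    exact ENNReal.mul_ne_top (ENNReal.pow_ne_top (by simp)) ENNReal.ofReal_ne_top
  set N := hlNorm {Z | IsCZ n Z} F with hNdef
  by_cases hNtop : N = ⊤
  · rw [hNtop, ENNReal.mul_top (mul_ne_zero hC0 (ENNReal.inv_ne_zero.2 hρtop))]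
    exact le_top
  -- the set of "bad" CZ sets
  set S : Set (Set ((Fin n → ℝ) × ℝ)) := {Z | IsCZ n Z ∧ ρ < F Z / volume Z} with hSdef
  have hFleN : ∀ Z ∈ S, F Z ≤ N := by
    intro Z hZ
    rw [hNdef, hlNorm]
    refine le_trans (le_of_eq ?_) (le_iSup _
      (⟨{Z}, by simpa using hZ.1, by simp⟩ :
        {s : Finset (Set ((Fin n → ℝ) × ℝ)) // ↑s ⊆ {Z | IsCZ n Z} ∧
          (s : Set (Set ((Fin n → ℝ) × ℝ))).Pairwise Disjoint}))
    simp
  have hmul : ∀ Z ∈ S, ρ * volume Z < F Z := by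
    intro Z hZ
    have hv := hZ.1.vol_pos
    exact (ENNReal.lt_div_iff_mul_lt (Or.inl hv.1.ne') (Or.inl hv.2)).1 hZ.2
  have hvolle : ∀ Z ∈ S, volume Z ≤ ρ⁻¹ * N := by
    intro Z hZ
    have h1 : ρ * volume Z ≤ N := le_trans (hmul Z hZ).le (hFleN Z hZ)
    calc volume Z = ρ⁻¹ * (ρ * volume Z) := by
          rw [← mul_assoc, ENNReal.inv_mul_cancel hρ.ne' hρtop, one_mul]
      _ ≤ ρ⁻¹ * N := mul_le_mul_right h1 _
  have hfin : ρ⁻¹ * N ≠ ⊤ :=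
    ENNReal.mul_ne_top (ENNReal.inv_ne_top.2 hρ.ne') hNtop
  -- Vitali selection
  obtain ⟨u, huS, hudisj, hcov⟩ :=
    Vitali.exists_disjoint_subfamily_covering_enlargement
      (id : Set ((Fin n → ℝ) × ℝ) → Set ((Fin n → ℝ) × ℝ)) S
      (fun Z => (volume Z).toReal) 2 one_lt_two
      (fun a _ => ENNReal.toReal_nonneg) ((ρ⁻¹ * N).toReal)
      (fun a ha => (ENNReal.toReal_le_toReal (ha.1.vol_pos.2) hfin).2 (hvolle a ha))
      (fun a ha => ha.1.nonempty)
  -- the enlargement map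
  have hstar : ∀ Z : Set ((Fin n → ℝ) × ℝ), ∃ W : Set ((Fin n → ℝ) × ℝ), Z ∈ u →
      ((∀ Z' : Set ((Fin n → ℝ) × ℝ), IsCZ n Z' → (Z' ∩ Z).Nonempty →
        volume Z' ≤ 2 * volume Z → Z' ⊆ W) ∧ volume W ≤ C * volume Z) := by
    intro Z
    by_cases h : Z ∈ u
    · obtain ⟨lo, hi, a, b, h1, h2⟩ := cz_star n hn Z (huS h).1
      exact ⟨_, fun _ => ⟨h1, h2⟩⟩
    · exact ⟨∅, fun h' => absurd h' h⟩
  choose W hW using hstar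
  -- E is covered by the W's
  have hEsub : {x | ρ < ⨆ Z ∈ {Z | IsCZ n Z ∧ x ∈ Z}, F Z / volume Z} ⊆ ⋃ Z ∈ u, W Z := by
    intro x hx
    simp only [mem_setOf_eq, lt_iSup_iff] at hx
    obtain ⟨Z, ⟨⟨hZcz, hxZ⟩, hlt⟩⟩ := hx
    have hZS : Z ∈ S := ⟨hZcz, hlt⟩
    obtain ⟨b, hbu, hinter, hδ⟩ := hcov Z hZS
    have hb2 : volume Z ≤ 2 * volume b := by
      have hb := (huS hbu).1.vol_pos
      have hZv := hZS.1.vol_pos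
      have h2top : (2 : ℝ≥0∞) * volume b ≠ ⊤ := ENNReal.mul_ne_top (by finiteness) hb.2
      rw [← ENNReal.toReal_le_toReal hZv.2 h2top]
      rw [ENNReal.toReal_mul]
      simpa using hδ
    have hsub : Z ⊆ W b := (hW b hbu).1 Z hZcz hinter hb2
    exact mem_biUnion hbu (hsub hxZ)
  -- u is countable
  have hucnt : u.Countable := by
    have hmble : ∀ z : ↥u, MeasurableSet ((z : Set ((Fin n → ℝ) × ℝ))) :=
      fun z => (huS z.2).1.measurableSet
    have hdisj : Pairwise (Function.onFun Disjoint fun z : ↥u => (z : Set ((Fin n → ℝ) × ℝ))) := by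
      intro i j hij
      exact hudisj i.2 j.2 (Subtype.coe_injective.ne hij)
    have hcnt := MeasureTheory.Measure.countable_meas_pos_of_disjoint_iUnion
      (μ := volume) hmble hdisj
    have huniv : {i : ↥u | 0 < volume (i : Set ((Fin n → ℝ) × ℝ))} = univ :=
      eq_univ_of_forall fun i => ((huS i.2).1.vol_pos).1
    rw [huniv, Set.countable_univ_iff] at hcnt
    exact Set.countable_coe_iff.1 hcnt
  -- sum bound
  have htsum : ∑' (Z : ↥u), F Z ≤ N := by
    classical
    rw [ENNReal.tsum_eq_iSup_sum]
    refine iSup_le fun s => ?_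
    have hinj : Function.Injective (fun z : ↥u => (z : Set ((Fin n → ℝ) × ℝ))) :=
      Subtype.coe_injective
    rw [← Finset.sum_image (f := F) (g := fun z : ↥u => (z : Set ((Fin n → ℝ) × ℝ)))
      (fun x _ y _ h => hinj h)]
    rw [hNdef, hlNorm]
    refine le_iSup_of_le (⟨s.image (fun z : ↥u => (z : Set ((Fin n → ℝ) × ℝ))), ?_, ?_⟩ :
      {s : Finset (Set ((Fin n → ℝ) × ℝ)) // ↑s ⊆ {Z | IsCZ n Z} ∧
        (s : Set (Set ((Fin n → ℝ) × ℝ))).Pairwise Disjoint}) (le_refl _)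
    · intro Q hQ
      simp only [Finset.coe_image, Set.mem_image] at hQ
      obtain ⟨z, _, rfl⟩ := hQ
      exact (huS z.2).1
    · intro a ha b hb hab
      simp only [Finset.coe_image, Set.mem_image] at ha hb
      obtain ⟨za, _, rfl⟩ := ha
      obtain ⟨zb, _, rfl⟩ := hb
      exact hudisj za.2 zb.2 hab
  -- conclusion
  calc volume {x | ρ < ⨆ Z ∈ {Z | IsCZ n Z ∧ x ∈ Z}, F Z / volume Z}
      ≤ volume (⋃ Z ∈ u, W Z) := measure_mono hEsub
    _ ≤ ∑' (Z : ↥u), volume (W Z) := measure_biUnion_le volume hucnt W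
    _ ≤ ∑' (Z : ↥u), C * (ρ⁻¹ * F Z) := by
        refine ENNReal.tsum_le_tsum fun z => ?_
        have hzS := huS z.2
        have h1 : volume (W z) ≤ C * volume (z : Set ((Fin n → ℝ) × ℝ)) := (hW z z.2).2
        have h2 : volume (z : Set ((Fin n → ℝ) × ℝ)) ≤ ρ⁻¹ * F z := by
          calc volume (z : Set ((Fin n → ℝ) × ℝ))
              = ρ⁻¹ * (ρ * volume (z : Set ((Fin n → ℝ) × ℝ))) := by
                rw [← mul_assoc, ENNReal.inv_mul_cancel hρ.ne' hρtop, one_mul]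
            _ ≤ ρ⁻¹ * F z := mul_le_mul_right (hmul _ hzS).le _
        exact le_trans h1 (mul_le_mul_right h2 _)
    _ = C * ρ⁻¹ * ∑' (Z : ↥u), F Z := by
        simp_rw [← mul_assoc]
        rw [ENNReal.tsum_mul_left]
    _ ≤ C * ρ⁻¹ * N := mul_le_mul_right htsum _
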